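/- Let A be an I-modal ririg in which each modal operator m is contractive (m(x) ≤ x) and satisfies m(a∨b) ≤ m(a)∨m(b), and which satisfies the prelinearity identity (a→b) ∨ (b→a) = 1. Then for all a, b ∈ A, the I-filter generated by a ∨ b equals the intersection of the I-filter generated by a and the I-filter generated by b. -/
import Mathlib


/-- An integral residuated rig (ririg). -/
class Ririg (A : Type*) extends CommMonoid A, SemilatticeSup A, OrderBot A, OrderTop A, HImp A where
  one_eq_top : (1 : A) = ⊤
  mul_sup : ∀ x y z : A, x * (y ⊔ z) = x * y ⊔ x * z
  mul_bot : ∀ x : A, x * ⊥ = ⊥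
  residuation : ∀ a b c : A, a * b ≤ c ↔ a ≤ b ⇨ c

/-- A modal operator on a ririg. -/
def IsModal {A : Type*} [Ririg A] (m : A → A) : Prop :=
  m 1 = 1 ∧ ∀ x y : A, m (x ⇨ y) ≤ m x ⇨ m y

/-- Interpretation of an I-block (finite composition of modal operators). -/
def blockApp {A ι : Type*} (f : ι → A → A) : List ι → A → A
  | [] => id
  | i :: L => f i ∘ blockApp f L

/-- I-filter. -/
def IsIFilter {A ι : Type*} [Ririg A] (f : ι → A → A) (F : Set A) : Prop :=
  F.Nonempty ∧ (∀ x y : A, x ∈ F → x ≤ y → y ∈ F) ∧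
    (∀ x y : A, x ∈ F → y ∈ F → x * y ∈ F) ∧ (∀ i : ι, ∀ x : A, x ∈ F → f i x ∈ F)

/-- Congruence of an I-modal ririg. -/
def IsRirigCon {A ι : Type*} [Ririg A] (f : ι → A → A) (θ : A → A → Prop) : Prop :=
  Equivalence θ ∧
    (∀ a b c d : A, θ a b → θ c d → θ (a ⊔ c) (b ⊔ d)) ∧
    (∀ a b c d : A, θ a b → θ c d → θ (a * c) (b * d)) ∧
    (∀ a b c d : A, θ a b → θ c d → θ (a ⇨ c) (b ⇨ d)) ∧
    (∀ i : ι, ∀ a b : A, θ a b → θ (f i a) (f i b))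

section Aux
variable {A ι : Type*} [Ririg A]

lemma rr_le_one (x : A) : x ≤ 1 := Ririg.one_eq_top (A := A) ▸ le_top

lemma rr_mul_le_right (x y : A) : x * y ≤ y := by
  have h : y * (x ⊔ 1) = y * x ⊔ y * 1 := Ririg.mul_sup y x 1
  rw [sup_eq_right.mpr (rr_le_one x), mul_one] at h
  calc x * y = y * x := mul_comm x y
    _ ≤ y * x ⊔ y := le_sup_left
    _ = y := h.symm

lemma rr_mul_mono {a b c d : A} (h1 : a ≤ b) (h2 : c ≤ d) : a * c ≤ b * d := by
  have k : ∀ u v w : A, v ≤ w → u * v ≤ u * w := by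
    intro u v w h
    have := Ririg.mul_sup u v w
    rw [sup_eq_right.mpr h] at this
    rw [this]; exact le_sup_left
  calc a * c ≤ a * d := k a c d h2
    _ = d * a := mul_comm a d
    _ ≤ d * b := k d a b h1
    _ = b * d := mul_comm d b

lemma rr_modal_mono {f : ι → A → A} (hf : ∀ i, IsModal (f i)) (i : ι) {x y : A}
    (h : x ≤ y) : f i x ≤ f i y := by
  have h1 : x ⇨ y = 1 := by
    refine le_antisymm (rr_le_one _) ?_
    rw [← Ririg.residuation, one_mul]; exact h
  have h2 := (hf i).2 x y
  rw [h1, (hf i).1] at h2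
  have := (Ririg.residuation 1 (f i x) (f i y)).mpr h2
  rwa [one_mul] at this

lemma rr_modal_mul {f : ι → A → A} (hf : ∀ i, IsModal (f i)) (i : ι) (x y : A) :
    f i x * f i y ≤ f i (x * y) := by
  have h1 : x ≤ y ⇨ x * y := (Ririg.residuation x y (x * y)).mp le_rfl
  have h2 : f i x ≤ f i y ⇨ f i (x * y) :=
    le_trans (rr_modal_mono hf i h1) ((hf i).2 y (x * y))
  exact (Ririg.residuation _ _ _).mpr h2

variable {f : ι → A → A}

lemma rr_block_mono (hf : ∀ i, IsModal (f i)) (B : List ι) {x y : A} (h : x ≤ y) :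
    blockApp f B x ≤ blockApp f B y := by
  induction B with
  | nil => exact h
  | cons i B ih => exact rr_modal_mono hf i ih

lemma rr_block_contract (hf : ∀ i, IsModal (f i)) (hcon : ∀ (i : ι) (x : A), f i x ≤ x)
    (B : List ι) (x : A) : blockApp f B x ≤ x := by
  induction B with
  | nil => exact le_rfl
  | cons i B ih => exact le_trans (hcon i _) ih

lemma rr_block_sup (hf : ∀ i, IsModal (f i))
    (hsup : ∀ (i : ι) (a b : A), f i (a ⊔ b) ≤ f i a ⊔ f i b) (B : List ι) (x y : A) :
    blockApp f B (x ⊔ y) ≤ blockApp f B x ⊔ blockApp f B y := by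
  induction B with
  | nil => exact le_rfl
  | cons i B ih => exact le_trans (rr_modal_mono hf i ih) (hsup i _ _)

lemma rr_block_append (B C : List ι) (x : A) :
    blockApp f (B ++ C) x = blockApp f B (blockApp f C x) := by
  induction B with
  | nil => rfl
  | cons i B ih => simp [blockApp, ih]

lemma rr_one_mem {F : Set A} (hF : IsIFilter f F) : (1 : A) ∈ F := by
  obtain ⟨z, hz⟩ := hF.1
  exact hF.2.1 z 1 hz (rr_le_one z)

lemma rr_block_mem {F : Set A} (hF : IsIFilter f F) (B : List ι) {x : A} (hx : x ∈ F) :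
    blockApp f B x ∈ F := by
  induction B with
  | nil => exact hx
  | cons i B ih => exact hF.2.2.2 i _ ih

lemma rr_prod_mem {F : Set A} (hF : IsIFilter f F) (l : List A) (h : ∀ z ∈ l, z ∈ F) :
    l.prod ∈ F := by
  induction l with
  | nil => exact rr_one_mem hF
  | cons p l ih =>
    rw [List.prod_cons]
    exact hF.2.2.1 _ _ (h p (by simp)) (ih fun z hz => h z (by simp [hz]))

-- p ⊔ v.prod ≥ ∏_{q∈v} (p ⊔ q)
lemma rr_sup_prod (p : A) (v : List A) :
    (v.map (fun q => p ⊔ q)).prod ≤ p ⊔ v.prod := by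
  induction v with
  | nil => simp [rr_le_one]
  | cons q v ih =>
    rw [List.map_cons, List.prod_cons, List.prod_cons]
    have h1 : (p ⊔ q) * p ≤ p := rr_mul_le_right _ _
    have h2 : (p ⊔ q) * v.prod ≤ p ⊔ q * v.prod := by
      rw [mul_comm, Ririg.mul_sup]
      exact sup_le_sup (rr_mul_le_right _ _) (le_of_eq (mul_comm _ _))
    calc (p ⊔ q) * (v.map (fun q => p ⊔ q)).prod
        ≤ (p ⊔ q) * (p ⊔ v.prod) := rr_mul_mono le_rfl ih
      _ = (p ⊔ q) * p ⊔ ((p ⊔ q) * v.prod) := Ririg.mul_sup _ _ _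
      _ ≤ p ⊔ (p ⊔ q * v.prod) := sup_le_sup h1 h2
      _ = p ⊔ q * v.prod := by rw [← sup_assoc, sup_idem]

-- double product lemma
lemma rr_double_prod (u v : List A) :
    (u.map (fun p => (v.map (fun q => p ⊔ q)).prod)).prod ≤ u.prod ⊔ v.prod := by
  induction u with
  | nil => simp [rr_le_one]
  | cons p u ih =>
    rw [List.map_cons, List.prod_cons, List.prod_cons]
    calc (v.map (fun q => p ⊔ q)).prod * (u.map (fun p => (v.map (fun q => p ⊔ q)).prod)).prod
        ≤ (p ⊔ v.prod) * (u.prod ⊔ v.prod) := rr_mul_mono (rr_sup_prod p v) ih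
      _ = (p ⊔ v.prod) * u.prod ⊔ (p ⊔ v.prod) * v.prod := Ririg.mul_sup _ _ _
      _ ≤ (p * u.prod ⊔ v.prod) ⊔ v.prod := by
          apply sup_le_sup
          · rw [mul_comm, Ririg.mul_sup]
            exact sup_le_sup (le_of_eq (mul_comm _ _)) (rr_mul_le_right _ _)
          · exact rr_mul_le_right _ _
      _ = p * u.prod ⊔ v.prod := by rw [sup_assoc, sup_idem]

end Aux

section Main
variable {A ι : Type*} [Ririg A] {f : ι → A → A}

lemma rr_modal_prod (hf : ∀ i, IsModal (f i)) (i : ι) (l : List A) :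
    (l.map (f i)).prod ≤ f i l.prod := by
  induction l with
  | nil => simp [(hf i).1]
  | cons p l ih =>
    rw [List.map_cons, List.prod_cons, List.prod_cons]
    exact le_trans (rr_mul_mono le_rfl ih) (rr_modal_mul hf i p l.prod)

lemma rr_adjoin (hf : ∀ i, IsModal (f i)) (F : Set A) (hF : IsIFilter f F) (a : A) :
    IsIFilter f {y | ∃ c ∈ F, ∃ L : List (List ι),
      c * (L.map (fun B => blockApp f B a)).prod ≤ y} := by
  refine ⟨⟨1, 1, rr_one_mem hF, [], by simp [rr_le_one]⟩, ?_, ?_, ?_⟩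
  · rintro x y ⟨c, hc, L, hle⟩ hxy
    exact ⟨c, hc, L, hle.trans hxy⟩
  · rintro x y ⟨c, hc, L, hL⟩ ⟨d, hd, M, hM⟩
    refine ⟨c * d, hF.2.2.1 c d hc hd, L ++ M, ?_⟩
    rw [List.map_append, List.prod_append, mul_mul_mul_comm]
    exact rr_mul_mono hL hM
  · rintro i x ⟨c, hc, L, hL⟩
    refine ⟨f i c, hF.2.2.2 i c hc, L.map (fun B => i :: B), ?_⟩
    have h1 : (L.map (fun B => i :: B)).map (fun B => blockApp f B a)
        = (L.map (fun B => blockApp f B a)).map (f i) := by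
      simp only [List.map_map]
      exact List.map_congr_left fun B _ => rfl
    rw [h1]
    calc f i c * ((L.map (fun B => blockApp f B a)).map (f i)).prod
        ≤ f i c * f i (L.map (fun B => blockApp f B a)).prod :=
          rr_mul_mono le_rfl (rr_modal_prod hf i _)
      _ ≤ f i (c * (L.map (fun B => blockApp f B a)).prod) := rr_modal_mul hf i _ _
      _ ≤ f i x := rr_modal_mono hf i hL

lemma rr_mem_adjoin (F : Set A) (hF : IsIFilter f F) (a : A) :
    a ∈ {y | ∃ c ∈ F, ∃ L : List (List ι),
      c * (L.map (fun B => blockApp f B a)).prod ≤ y} :=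
  ⟨1, rr_one_mem hF, [[]], by simp [blockApp]⟩

end Main


theorem stmt16 {A ι : Type*} [Ririg A] (f : ι → A → A) (hf : ∀ i, IsModal (f i))
    (hcon : ∀ (i : ι) (x : A), f i x ≤ x)
    (hsup : ∀ (i : ι) (a b : A), f i (a ⊔ b) ≤ f i a ⊔ f i b)
    (hprel : ∀ a b : A, (a ⇨ b) ⊔ (b ⇨ a) = 1) (a b : A) :
    ⋂₀ {F : Set A | IsIFilter f F ∧ a ⊔ b ∈ F} =
      ⋂₀ {F : Set A | IsIFilter f F ∧ a ∈ F} ∩ ⋂₀ {F : Set A | IsIFilter f F ∧ b ∈ F} := by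
  ext x
  simp only [Set.mem_sInter, Set.mem_inter_iff, Set.mem_setOf_eq]
  constructor
  · intro h
    exact ⟨fun F hFa => h F ⟨hFa.1, hFa.1.2.1 a (a ⊔ b) hFa.2 le_sup_left⟩,
      fun F hFb => h F ⟨hFb.1, hFb.1.2.1 b (a ⊔ b) hFb.2 le_sup_right⟩⟩
  · rintro ⟨ha, hb⟩ F ⟨hF, hab⟩
    obtain ⟨c, hc, L, hL⟩ := ha _ ⟨rr_adjoin hf F hF a, rr_mem_adjoin F hF a⟩
    obtain ⟨d, hd, M, hM⟩ := hb _ ⟨rr_adjoin hf F hF b, rr_mem_adjoin F hF b⟩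
    set u : List A := c :: L.map (fun B => blockApp f B a) with hu
    set v : List A := d :: M.map (fun C => blockApp f C b) with hv
    have hux : u.prod ≤ x := by rw [hu, List.prod_cons]; exact hL
    have hvx : v.prod ≤ x := by rw [hv, List.prod_cons]; exact hM
    have key : (u.map (fun p => (v.map (fun q => p ⊔ q)).prod)).prod ∈ F := by
      apply rr_prod_mem hF
      intro z hz
      rw [List.mem_map] at hz
      obtain ⟨p, hp, rfl⟩ := hz
      apply rr_prod_mem hF
      intro w hw
      rw [List.mem_map] at hw
      obtain ⟨q, hq, rfl⟩ := hw
      rw [hu, List.mem_cons, List.mem_map] at hp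
      rw [hv, List.mem_cons, List.mem_map] at hq
      rcases hp with rfl | ⟨B, _, rfl⟩
      · exact hF.2.1 p _ hc le_sup_left
      · rcases hq with rfl | ⟨C, _, rfl⟩
        · exact hF.2.1 q _ hd le_sup_right
        · refine hF.2.1 (blockApp f (B ++ C) (a ⊔ b)) _ (rr_block_mem hF _ hab) ?_
          rw [rr_block_append]
          calc blockApp f B (blockApp f C (a ⊔ b))
              ≤ blockApp f B (blockApp f C a ⊔ blockApp f C b) :=
                rr_block_mono hf B (rr_block_sup hf hsup C a b)
            _ ≤ blockApp f B (blockApp f C a) ⊔ blockApp f B (blockApp f C b) :=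
                rr_block_sup hf hsup B _ _
            _ ≤ blockApp f B a ⊔ blockApp f C b :=
                sup_le_sup (rr_block_mono hf B (rr_block_contract hf hcon C a))
                  (rr_block_contract hf hcon B _)
    exact hF.2.1 _ x key (le_trans (rr_double_prod u v) (sup_le hux hvx))
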